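/- With $H$, $Q$, $r$ as in the NewSamp construction (eigenvalues $\lambda_1 \ge \cdots \ge \lambda_p > 0$, $Q = \lambda_{r+1}^{-1} I + U_r(\Lambda_r^{-1} - \lambda_{r+1}^{-1} I_r) U_r^T$), if the step size satisfies $0 < \eta \le 2/(1 + \lambda_p/\lambda_{r+1})$, then $\|I - \eta Q H\|_2 = 1 - \eta \lambda_p / \lambda_{r+1} < 1$. -/

import Mathlib

open scoped Matrix.Norms.L2Operator
open Matrix

lemma aux_l2_opNorm_diagonal {m : Type*} [Fintype m] [DecidableEq m]
    (d : m → ℝ) (i₀ : m) (hmax : ∀ i, |d i| ≤ |d i₀|) :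
    ‖Matrix.diagonal d‖ = |d i₀| := by
  refine le_antisymm ?_ ?_
  · rw [Matrix.l2_opNorm_def]
    refine ContinuousLinearMap.opNorm_le_bound _ (abs_nonneg _) fun x => ?_
    have happ : ∀ i, ((Matrix.toEuclideanLin.trans LinearMap.toContinuousLinearMap
        (Matrix.diagonal d)) x : EuclideanSpace ℝ m) i = d i * x i := by
      intro i
      show ((Matrix.diagonal d).mulVec (WithLp.equiv 2 _ x)) i = d i * x i
      simp [Matrix.mulVec_diagonal]
    rw [EuclideanSpace.norm_eq, EuclideanSpace.norm_eq,
      ← Real.sqrt_sq (abs_nonneg (d i₀)), ← Real.sqrt_mul (by positivity),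
      Finset.mul_sum]
    apply Real.sqrt_le_sqrt
    apply Finset.sum_le_sum
    intro i _
    rw [happ i]
    simp only [Real.norm_eq_abs, abs_mul, mul_pow, sq_abs]
    have h1 : d i ^ 2 ≤ d i₀ ^ 2 := by
      have := hmax i; rw [← sq_abs (d i), ← sq_abs (d i₀)]
      nlinarith [abs_nonneg (d i), abs_nonneg (d i₀)]
    nlinarith [sq_nonneg (x i)]
  · set e : EuclideanSpace ℝ m := EuclideanSpace.single i₀ 1 with he
    have h1 := Matrix.l2_opNorm_mulVec (Matrix.diagonal d) e
    have h2 : (EuclideanSpace.equiv m ℝ).symm ((Matrix.diagonal d).mulVec e) =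
        EuclideanSpace.single i₀ (d i₀) := by
      apply (EuclideanSpace.equiv m ℝ).injective
      ext i
      show ((Matrix.diagonal d).mulVec e) i = _
      rw [Matrix.mulVec_diagonal]
      by_cases h : i = i₀ <;>
        simp [h, he, EuclideanSpace.single_apply]
    calc |d i₀| = ‖(EuclideanSpace.equiv m ℝ).symm ((Matrix.diagonal d).mulVec e)‖ := by
          rw [h2, EuclideanSpace.norm_single, Real.norm_eq_abs]
      _ ≤ ‖Matrix.diagonal d‖ * ‖e‖ := h1
      _ = ‖Matrix.diagonal d‖ := by
          rw [he, EuclideanSpace.norm_single]; simp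

lemma aux_sum_vecMulVec {N : ℕ} (u : Fin N → (Fin N → ℝ)) (c : Fin N → ℝ) :
    ∑ j, c j • Matrix.vecMulVec (u j) (u j) =
      (Matrix.of u)ᵀ * (Matrix.diagonal c * Matrix.of u) := by
  ext i k
  rw [Matrix.mul_apply]
  simp only [Matrix.sum_apply, Matrix.smul_apply, Matrix.vecMulVec_apply, smul_eq_mul,
    Matrix.transpose_apply, Matrix.of_apply, Matrix.diagonal_mul]
  exact Finset.sum_congr rfl fun j _ => by ring

lemma aux_unitary_conj_norm {N : ℕ} (U A : Matrix (Fin N) (Fin N) ℝ)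
    (hU : U ∈ Matrix.unitaryGroup (Fin N) ℝ) : ‖Uᵀ * A * U‖ = ‖A‖ := by
  have hsU : star U = Uᵀ := by
    ext i j; simp [Matrix.star_apply]
  rw [← hsU, CStarRing.norm_mul_mem_unitary (star U * A) hU,
    CStarRing.norm_mem_unitary_mul A (Unitary.star_mem hU)]

theorem newsamp_stepsize_contraction
    {n r : ℕ} (hr : r < n + 1)
    (u : Fin (n + 1) → (Fin (n + 1) → ℝ))
    (horth : ∀ i j, dotProduct (u i) (u j) = if i = j then (1:ℝ) else 0)
    (lam : Fin (n + 1) → ℝ) (hlam : Antitone lam) (hpos : ∀ i, 0 < lam i)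
    (H Q : Matrix (Fin (n + 1)) (Fin (n + 1)) ℝ)
    (hH : H = ∑ i, lam i • Matrix.vecMulVec (u i) (u i))
    (hQ : Q = (lam ⟨r, hr⟩)⁻¹ • (1 : Matrix (Fin (n + 1)) (Fin (n + 1)) ℝ) +
      ∑ i ∈ Finset.univ.filter (fun i : Fin (n + 1) => (i : ℕ) < r),
        ((lam i)⁻¹ - (lam ⟨r, hr⟩)⁻¹) • Matrix.vecMulVec (u i) (u i))
    (η : ℝ) (hη : 0 < η)
    (hstep : η ≤ 2 / (1 + lam (Fin.last n) / lam ⟨r, hr⟩)) :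
    ‖(1 : Matrix (Fin (n + 1)) (Fin (n + 1)) ℝ) - η • (Q * H)‖ =
      1 - η * lam (Fin.last n) / lam ⟨r, hr⟩ ∧
    1 - η * lam (Fin.last n) / lam ⟨r, hr⟩ < 1 := by
  set a : ℝ := lam ⟨r, hr⟩ with ha_def
  set L : ℝ := lam (Fin.last n) with hL_def
  have ha : 0 < a := hpos _
  have hL : 0 < L := hpos _
  have hLa : L ≤ a := hlam (by simp [Fin.le_def]; omega)
  have hx1 : L / a ≤ 1 := (div_le_one ha).mpr hLa
  have h1x : (0:ℝ) < 1 + L / a := by positivity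
  have hηs : η * (1 + L / a) ≤ 2 := (le_div_iff₀ h1x).mp hstep
  have hηL : η * (L / a) ≤ 1 := by nlinarith [div_pos hL ha]
  set U : Matrix (Fin (n+1)) (Fin (n+1)) ℝ := Matrix.of u with hU_def
  have hUU : U * Uᵀ = 1 := by
    ext i j
    rw [Matrix.mul_apply, Matrix.one_apply]
    simpa [dotProduct, hU_def] using horth i j
  have hUtU : Uᵀ * U = 1 := mul_eq_one_comm.mp hUU
  have hsU : star U = Uᵀ := by ext i j; simp [Matrix.star_apply]
  have hUmem : U ∈ Matrix.unitaryGroup (Fin (n+1)) ℝ :=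
    Matrix.mem_unitaryGroup_iff.mpr (by rw [hsU]; exact hUU)
  set q : Fin (n+1) → ℝ := fun j => if (j:ℕ) < r then (lam j)⁻¹ else a⁻¹ with hq_def
  set μ : Fin (n+1) → ℝ := fun j => 1 - η * (q j * lam j) with hμ_def
  have hone : (1 : Matrix (Fin (n+1)) (Fin (n+1)) ℝ) =
      ∑ j, Matrix.vecMulVec (u j) (u j) := by
    have h := aux_sum_vecMulVec u (fun _ => 1)
    simp only [one_smul] at h
    rw [h, Matrix.diagonal_one, Matrix.one_mul, hUtU]
  have hQd : Q = Uᵀ * (Matrix.diagonal q * U) := by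
    rw [← aux_sum_vecMulVec, hQ, hone, Finset.smul_sum, Finset.sum_filter,
      ← Finset.sum_add_distrib]
    refine Finset.sum_congr rfl fun j _ => ?_
    by_cases hj : (j:ℕ) < r
    · simp only [hq_def, hj, if_true, ← add_smul]
      ring_nf
    · simp only [hq_def, hj, if_false, add_zero]
  have hHd : H = Uᵀ * (Matrix.diagonal lam * U) := by
    rw [hH, aux_sum_vecMulVec]
  have hQH : Q * H = Uᵀ * (Matrix.diagonal (fun j => q j * lam j) * U) := by
    rw [hQd, hHd, Matrix.mul_assoc, Matrix.mul_assoc (Matrix.diagonal q) U,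
      ← Matrix.mul_assoc U Uᵀ, hUU, Matrix.one_mul,
      ← Matrix.mul_assoc (Matrix.diagonal q) (Matrix.diagonal lam) U,
      Matrix.diagonal_mul_diagonal]
  have hdiag : Matrix.diagonal μ =
      1 - η • Matrix.diagonal (fun j => q j * lam j) := by
    ext i j
    by_cases h : i = j <;> simp [hμ_def, Matrix.diagonal_apply, h, Matrix.one_apply]
  have hM : (1 : Matrix (Fin (n+1)) (Fin (n+1)) ℝ) - η • (Q * H) =
      Uᵀ * (Matrix.diagonal μ * U) := by
    rw [hQH, hdiag, Matrix.sub_mul, Matrix.one_mul, Matrix.mul_sub, hUtU,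
      smul_mul_assoc, mul_smul_comm]
  -- bounds on t j = q j * lam j
  have hrlast : ¬ ((Fin.last n : ℕ) < r) := by simp [Fin.last]; omega
  have hμlast : μ (Fin.last n) = 1 - η * (L / a) := by
    simp only [hμ_def, hq_def, hrlast, if_false]
    rw [inv_mul_eq_div]
  have hμlast_nonneg : 0 ≤ μ (Fin.last n) := by rw [hμlast]; linarith
  have hmax : ∀ j, |μ j| ≤ |μ (Fin.last n)| := by
    intro j
    have ht : L / a ≤ q j * lam j ∧ q j * lam j ≤ 1 := by
      by_cases hj : (j:ℕ) < r
      · simp only [hq_def, hj, if_true, inv_mul_cancel₀ (hpos j).ne']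
        exact ⟨hx1, le_refl 1⟩
      · simp only [hq_def, hj, if_false, inv_mul_eq_div]
        have hja : lam j ≤ a := hlam (by simp [Fin.le_def]; omega)
        have hjL : L ≤ lam j := hlam (Fin.le_last j)
        constructor
        · gcongr
        · exact (div_le_one ha).mpr hja
    rw [abs_of_nonneg hμlast_nonneg, hμlast, abs_le]
    constructor
    · simp only [hμ_def]; nlinarith [ht.1, ht.2]
    · simp only [hμ_def]; nlinarith [ht.1, ht.2]
  constructor
  · rw [hM, ← Matrix.mul_assoc, aux_unitary_conj_norm _ _ hUmem,
      aux_l2_opNorm_diagonal μ (Fin.last n) hmax, abs_of_nonneg hμlast_nonneg, hμlast]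
    ring
  · have : 0 < η * L / a := by positivity
    linarith
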